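/- Let R be a finite ring with unity of characteristic p, and let T be a maximal subring of R. Then T ∩ J(R) is a two-sided ideal of R, where J(R) is the Jacobson radical of R. -/

import Mathlib

namespace Stmt7Aux

variable {R : Type*} [Ring R]

local notation "J" => Ideal.jacobson (⊥ : Ideal R)

theorem jac_mul_right {x : R} (hx : x ∈ J) (r : R) : x * r ∈ J := by
  rw [Ideal.mem_jacobson_iff] at hx ⊢
  intro y
  obtain ⟨z, hz⟩ := hx (r * y)
  rw [Ideal.mem_bot] at hz
  refine ⟨1 - y * x * z * r, ?_⟩
  rw [Ideal.mem_bot]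
  have : (1 - y * x * z * r) * y * (x * r) + (1 - y * x * z * r) - 1
      = -((y * x) * (z * (r * y) * x + z - 1) * r) := by noncomm_ring
  rw [this, hz]
  simp

theorem jac_left_inv {a : R} (ha : a ∈ J) : ∃ z : R, z * (1 - a) = 1 := by
  rw [Ideal.mem_jacobson_iff] at ha
  obtain ⟨z, hz⟩ := ha (-1)
  rw [Ideal.mem_bot] at hz
  refine ⟨z, ?_⟩
  have : z * (1 - a) = z * -1 * a + z - 1 + 1 := by noncomm_ring
  rw [this, hz, zero_add]

/-- Nakayama for finite (possibly noncommutative) rings. -/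
theorem nakayama [Finite R] (N : Submodule R R) (hN : N ≤ J • N) : N = ⊥ := by
  have decomp : ∀ (s : Finset R) (x : R), x ∈ J • Submodule.span R (↑s : Set R) →
      ∃ a : R → R, (∀ i, a i ∈ J) ∧ x = ∑ i ∈ s, a i * i := by
    intro s x hx
    refine Submodule.smul_induction_on hx ?_ ?_
    · intro r hr n hn
      obtain ⟨f, -, hf⟩ := Submodule.mem_span_finset.1 hn
      refine ⟨fun i => r * f i, fun i => jac_mul_right hr (f i), ?_⟩
      rw [smul_eq_mul, ← hf, Finset.mul_sum]
      exact Finset.sum_congr rfl fun i _ => by rw [smul_eq_mul, mul_assoc]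
    · rintro x y ⟨a, ha, rfl⟩ ⟨b, hb, rfl⟩
      exact ⟨fun i => a i + b i, fun i => add_mem (ha i) (hb i), by
        rw [← Finset.sum_add_distrib]; exact Finset.sum_congr rfl fun i _ => (add_mul _ _ _).symm⟩
  have key : ∀ (n : ℕ) (s : Finset R), s.card = n →
      Submodule.span R (↑s : Set R) ≤ J • Submodule.span R (↑s : Set R) →
      Submodule.span R (↑s : Set R) = ⊥ := by
    intro n
    induction n using Nat.strong_induction_on with
    | _ n ih =>
      intro s hcard hs
      classical
      subst hcard
      rcases s.eq_empty_or_nonempty with rfl | ⟨m, hm⟩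
      · simp
      · have hmmem : m ∈ Submodule.span R (↑s : Set R) := Submodule.subset_span hm
        obtain ⟨a, haJ, hsum⟩ := decomp s m (hs hmmem)
        have hsum' : (1 - a m) * m = ∑ i ∈ s.erase m, a i * i := by
          have hh := Finset.add_sum_erase s (fun i => a i * i) hm
          rw [sub_mul, one_mul, sub_eq_iff_eq_add', hh]
          exact hsum
        obtain ⟨z, hz⟩ := jac_left_inv (haJ m)
        have hmem : m ∈ Submodule.span R (↑(s.erase m) : Set R) := by
          have hm' : m = z • ∑ i ∈ s.erase m, a i * i := by
            rw [← hsum', smul_eq_mul, ← mul_assoc, hz, one_mul]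
          have hin : (z • ∑ i ∈ s.erase m, a i * i) ∈
              Submodule.span R (↑(s.erase m) : Set R) := by
            refine Submodule.smul_mem _ _ (Submodule.sum_mem _ fun i hi => ?_)
            rw [← smul_eq_mul]
            exact Submodule.smul_mem _ _ (Submodule.subset_span (by simp only [Finset.coe_erase, Set.mem_diff, Finset.mem_coe]; exact ⟨Finset.mem_of_mem_erase hi, by simp [Finset.ne_of_mem_erase hi]⟩))
          rwa [← hm'] at hin
        have hspan_eq : Submodule.span R (↑s : Set R)
            = Submodule.span R (↑(s.erase m) : Set R) := by
          refine le_antisymm (Submodule.span_le.2 ?_)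
            (Submodule.span_mono (by simp only [Finset.coe_subset]; exact fun x hx => Finset.mem_of_mem_erase hx))
          intro x hx
          rcases eq_or_ne x m with rfl | hxm
          · exact hmem
          · exact Submodule.subset_span (by simp [Finset.mem_erase, hxm]; exact hx)
        have hcard : (s.erase m).card < s.card := Finset.card_erase_lt_of_mem hm
        have := ih (s.erase m).card hcard (s.erase m) rfl (by rw [← hspan_eq]; exact hs)
        rw [hspan_eq, this]
  have hfin : (N : Set R).Finite := Set.toFinite _
  have hcoe : (↑hfin.toFinset : Set R) = (N : Set R) := hfin.coe_toFinset
  have hNspan : Submodule.span R (↑hfin.toFinset : Set R) = N := by rw [hcoe, Submodule.span_eq]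
  rw [← hNspan]
  exact key _ hfin.toFinset rfl (by rw [hNspan]; exact hN)


/-- Iterated power of the Jacobson radical, as a chain of submodules. -/
def Npow (R : Type*) [Ring R] : ℕ → Submodule R R
  | 0 => ⊤
  | n + 1 => (Ideal.jacobson (⊥ : Ideal R)) • Npow R n

theorem Npow_succ_le (n : ℕ) : Npow R (n + 1) ≤ Npow R n :=
  Submodule.smul_le_right

theorem Npow_anti {m n : ℕ} (h : m ≤ n) : Npow R n ≤ Npow R m :=
  antitone_nat_of_succ_le Npow_succ_le h

theorem Npow_mul_right {n : ℕ} {x : R} (hx : x ∈ Npow R n) (r : R) : x * r ∈ Npow R n := by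
  induction n generalizing x with
  | zero => trivial
  | succ n ih =>
    refine Submodule.smul_induction_on hx (fun j hj y hy => ?_) (fun y z hy hz => ?_)
    · have : (j • y) * r = j • (y * r) := by simp [smul_eq_mul, mul_assoc]
      rw [this]
      exact Submodule.smul_mem_smul hj (ih hy)
    · rw [add_mul]; exact add_mem hy hz

theorem Npow_one_le_J : Npow R 1 ≤ J := by
  intro x hx
  refine Submodule.smul_induction_on hx (fun j hj y _ => ?_) (fun y z hy hz => add_mem hy hz)
  rw [smul_eq_mul]
  exact jac_mul_right hj y

theorem J_le_Npow_one : J ≤ Npow R 1 := by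
  intro x hx
  have : x = x • (1 : R) := by simp
  rw [this]
  exact Submodule.smul_mem_smul hx trivial

theorem mem_Npow_mul {m n : ℕ} {x y : R} (hx : x ∈ Npow R m) (hy : y ∈ Npow R n) :
    x * y ∈ Npow R (m + n) := by
  induction m generalizing x with
  | zero => simpa using Submodule.smul_mem _ x hy
  | succ m ih =>
    have : (m + 1) + n = (m + n) + 1 := by omega
    rw [this]
    refine Submodule.smul_induction_on hx (fun j hj z hz => ?_) (fun z w hz hw => ?_)
    · have : (j • z) * y = j • (z * y) := by simp [smul_eq_mul, mul_assoc]
      rw [this]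
      exact Submodule.smul_mem_smul hj (ih hz)
    · rw [add_mul]; exact add_mem hz hw

theorem exists_Npow_bot (R : Type*) [Ring R] [Finite R] : ∃ n : ℕ, Npow R n = ⊥ := by
  have : Finite (Submodule R R) :=
    Finite.of_injective (fun N => (N : Set R)) SetLike.coe_injective
  obtain ⟨m, n, hmn, heq⟩ := Finite.exists_ne_map_eq_of_infinite (Npow R)
  wlog hlt : m < n generalizing m n
  · exact this n m hmn.symm heq.symm (by omega)
  have hstab : Npow R m = Npow R (m + 1) :=
    le_antisymm (heq ▸ Npow_anti (by omega)) (Npow_succ_le m)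
  exact ⟨m, nakayama (Npow R m) (le_of_eq hstab)⟩


end Stmt7Aux

open Stmt7Aux

/-- In a finite unital ring of characteristic `p`, the intersection of a maximal
subring with the Jacobson radical is a two-sided ideal of `R`. -/
theorem stmt_7 {R : Type*} [Ring R] [Finite R] (p : ℕ) (hp : p.Prime) [CharP R p]
    (T : NonUnitalSubring R) (hT : IsCoatom T) :
    ∃ I : TwoSidedIdeal R,
      (I : Set R) = (T : Set R) ∩ (Ideal.jacobson (⊥ : Ideal R) : Set R) := by
  classical
  set A : Set R := (T : Set R) ∩ (Ideal.jacobson (⊥ : Ideal R) : Set R) with hA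
  have hA_T : ∀ {a : R}, a ∈ A → a ∈ T := fun ha => ha.1
  have hA_J : ∀ {a : R}, a ∈ A → a ∈ Ideal.jacobson (⊥ : Ideal R) := fun ha => ha.2
  have hA_zero : (0 : R) ∈ A := ⟨zero_mem T, zero_mem _⟩
  have hA_add : ∀ {a b : R}, a ∈ A → b ∈ A → a + b ∈ A :=
    fun ha hb => ⟨add_mem ha.1 hb.1, add_mem ha.2 hb.2⟩
  have hA_neg : ∀ {a : R}, a ∈ A → -a ∈ A := fun ha => ⟨neg_mem ha.1, neg_mem ha.2⟩
  have hJ_mul_left : ∀ (x : R) {a : R}, a ∈ A → x * a ∈ Ideal.jacobson (⊥ : Ideal R) := by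
    intro x a ha
    rw [← smul_eq_mul]
    exact Submodule.smul_mem _ x ha.2
  have hTA : ∀ {t a : R}, t ∈ T → a ∈ A → t * a ∈ A :=
    fun ht ha => ⟨mul_mem ht ha.1, hJ_mul_left _ ha⟩
  have hAT : ∀ {t a : R}, t ∈ T → a ∈ A → a * t ∈ A :=
    fun ht ha => ⟨mul_mem ha.1 ht, jac_mul_right ha.2 _⟩
  have hA_N1 : ∀ {a : R}, a ∈ A → a ∈ Npow R 1 := fun ha => J_le_Npow_one ha.2
  -- the key predicate
  set P : ℕ → Prop := fun m => ∀ x ∈ Npow R m, ∀ a ∈ A, x * a ∈ T ∧ a * x ∈ T with hPdef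
  set Good : Prop := ∀ r : R, ∀ a ∈ A, r * a ∈ A ∧ a * r ∈ A with hGdef
  -- descent step
  have key1 : ∀ m : ℕ, P (m + 1) → P m ∨ Good := by
    intro m hP
    have hP1a : ∀ {x : R}, x ∈ Npow R (m + 1) → ∀ {a : R}, a ∈ A → x * a ∈ A :=
      fun {x} hx {a} ha => ⟨(hP _ hx _ ha).1, hJ_mul_left _ ha⟩
    have hP1b : ∀ {x : R}, x ∈ Npow R (m + 1) → ∀ {a : R}, a ∈ A → a * x ∈ A :=
      fun {x} hx {a} ha => ⟨(hP _ hx _ ha).2, jac_mul_right ha.2 _⟩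
    have hNA : ∀ {x a : R}, x ∈ Npow R m → a ∈ A → x * a ∈ Npow R (m + 1) :=
      fun hx ha => mem_Npow_mul hx (hA_N1 ha)
    have hAN : ∀ {x a : R}, a ∈ A → x ∈ Npow R m → a * x ∈ Npow R (m + 1) := by
      intro x a ha hx
      have := mem_Npow_mul (hA_N1 ha) hx
      rwa [add_comm] at this
    have hNAN : ∀ {x a x' : R}, x ∈ Npow R m → a ∈ A → x' ∈ Npow R m →
        x * a * x' ∈ Npow R (m + 1) := by
      intro x a x' hx ha hx'
      exact Npow_anti (by omega) (mem_Npow_mul (hNA hx ha) hx')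
    set S : Set R := (T : Set R)
        ∪ {z | ∃ x ∈ Npow R m, ∃ a ∈ A, z = x * a}
        ∪ {z | ∃ a ∈ A, ∃ x ∈ Npow R m, z = a * x}
        ∪ {z | ∃ x ∈ Npow R m, ∃ a ∈ A, ∃ x' ∈ Npow R m, z = x * a * x'} with hSdef
    have mem1 : ∀ {t : R}, t ∈ T → t ∈ S := fun ht => Or.inl (Or.inl (Or.inl ht))
    have mem2 : ∀ {x a : R}, x ∈ Npow R m → a ∈ A → x * a ∈ S :=
      fun hx ha => Or.inl (Or.inl (Or.inr ⟨_, hx, _, ha, rfl⟩))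
    have mem3 : ∀ {x a : R}, a ∈ A → x ∈ Npow R m → a * x ∈ S :=
      fun ha hx => Or.inl (Or.inr ⟨_, ha, _, hx, rfl⟩)
    have mem4 : ∀ {x a x' : R}, x ∈ Npow R m → a ∈ A → x' ∈ Npow R m → x * a * x' ∈ S :=
      fun hx ha hx' => Or.inr ⟨_, hx, _, ha, _, hx', rfl⟩
    set G : AddSubgroup R := AddSubgroup.closure S with hGdef'
    have hSG : S ⊆ G := AddSubgroup.subset_closure
    -- all 16 products of generators lie in G
    have mul_gen : ∀ z₁ ∈ S, ∀ z₂ ∈ S, z₁ * z₂ ∈ G := by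
      rintro z₁ (((h1 | ⟨x, hx, a, ha, rfl⟩) | ⟨a, ha, x, hx, rfl⟩) | ⟨x, hx, a, ha, x', hx', rfl⟩) z₂
          (((h2 | ⟨y, hy, b, hb, rfl⟩) | ⟨b, hb, y, hy, rfl⟩) | ⟨y, hy, b, hb, y', hy', rfl⟩)
      -- row 1 : z₁ = t ∈ T
      · exact hSG (mem1 (mul_mem h1 h2))
      · have : z₁ * (y * b) = (z₁ * y) * b := by noncomm_ring
        rw [this]
        exact hSG (mem2 (by rw [← smul_eq_mul]; exact Submodule.smul_mem _ _ hy) hb)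
      · have : z₁ * (b * y) = (z₁ * b) * y := by noncomm_ring
        rw [this]
        exact hSG (mem3 (hTA h1 hb) hy)
      · have : z₁ * (y * b * y') = ((z₁ * y) * b) * y' := by noncomm_ring
        rw [this]
        exact hSG (mem4 (by rw [← smul_eq_mul]; exact Submodule.smul_mem _ _ hy) hb hy')
      -- row 2 : z₁ = x * a
      · have : (x * a) * z₂ = x * (a * z₂) := by noncomm_ring
        rw [this]
        exact hSG (mem2 hx (hAT h2 ha))
      · have : (x * a) * (y * b) = x * ((a * y) * b) := by noncomm_ring
        rw [this]
        exact hSG (mem2 hx (hP1a (hAN ha hy) hb))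
      · have : (x * a) * (b * y) = x * (a * b) * y := by noncomm_ring
        rw [this]
        exact hSG (mem4 hx ⟨mul_mem ha.1 hb.1, hJ_mul_left _ hb⟩ hy)
      · have : (x * a) * (y * b * y') = x * ((a * y) * b) * y' := by noncomm_ring
        rw [this]
        exact hSG (mem4 hx (hP1a (hAN ha hy) hb) hy')
      -- row 3 : z₁ = a * x
      · have : (a * x) * z₂ = a * (x * z₂) := by noncomm_ring
        rw [this]
        exact hSG (mem3 ha (Npow_mul_right hx _))
      · have : (a * x) * (y * b) = ((a * (x * y)) * b) := by noncomm_ring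
        rw [this]
        have hxy : a * (x * y) ∈ Npow R (m + 1) := by
          have h1 : x * y ∈ Npow R m := Npow_anti (by omega) (mem_Npow_mul hx hy)
          exact hAN ha h1
        exact hSG (mem1 (hA_T (hP1a hxy hb)))
      · have : (a * x) * (b * y) = (a * (x * b)) * y := by noncomm_ring
        rw [this]
        exact hSG (mem3 (hP1b (hNA hx hb) ha) hy)
      · have : (a * x) * (y * b * y') = ((a * (x * y)) * b) * y' := by noncomm_ring
        rw [this]
        have hxy : a * (x * y) ∈ Npow R (m + 1) :=
          hAN ha (Npow_anti (by omega) (mem_Npow_mul hx hy))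
        exact hSG (mem3 (hP1a hxy hb) hy')
      -- row 4 : z₁ = x * a * x'
      · have : (x * a * x') * z₂ = x * a * (x' * z₂) := by noncomm_ring
        rw [this]
        exact hSG (mem4 hx ha (Npow_mul_right hx' _))
      · have : (x * a * x') * (y * b) = x * ((a * (x' * y)) * b) := by noncomm_ring
        rw [this]
        have hxy : a * (x' * y) ∈ Npow R (m + 1) :=
          hAN ha (Npow_anti (by omega) (mem_Npow_mul hx' hy))
        exact hSG (mem2 hx (hP1a hxy hb))
      · have : (x * a * x') * (b * y) = x * ((a * x') * b) * y := by noncomm_ring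
        rw [this]
        exact hSG (mem4 hx (hP1a (hAN ha hx') hb) hy)
      · have : (x * a * x') * (y * b * y') = x * ((a * (x' * y)) * b) * y' := by noncomm_ring
        rw [this]
        have hxy : a * (x' * y) ∈ Npow R (m + 1) :=
          hAN ha (Npow_anti (by omega) (mem_Npow_mul hx' hy))
        exact hSG (mem4 hx (hP1a hxy hb) hy')
    -- G is closed under multiplication
    have hmulG : ∀ x ∈ G, ∀ y ∈ G, x * y ∈ G := by
      intro x hx
      refine AddSubgroup.closure_induction (fun z hz => ?_) ?_ ?_ ?_ hx
      · intro y hy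
        refine AddSubgroup.closure_induction (fun w hw => mul_gen z hz w hw) ?_ ?_ ?_ hy
        · rw [mul_zero]; exact zero_mem G
        · intro u v _ _ hu hv
          rw [mul_add]; exact add_mem hu hv
        · intro u _ hu
          rw [mul_neg]; exact neg_mem hu
      · intro y _
        rw [zero_mul]; exact zero_mem G
      · intro u v _ _ hu hv y hy
        rw [add_mul]; exact add_mem (hu y hy) (hv y hy)
      · intro u _ hu y hy
        rw [neg_mul]; exact neg_mem (hu y hy)
    -- the subring generated
    set T' : NonUnitalSubring R :=
      { carrier := (G : Set R)
        zero_mem' := G.zero_mem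
        add_mem' := fun ha hb => G.add_mem ha hb
        neg_mem' := fun ha => G.neg_mem ha
        mul_mem' := fun {a b} ha hb => hmulG a ha b hb } with hT'def
    have hmemT' : ∀ {x : R}, x ∈ T' ↔ x ∈ G := fun {x} => Iff.rfl
    have hle : T ≤ T' := fun t ht => hmemT'.2 (hSG (mem1 ht))
    rcases eq_or_lt_of_le hle with heq | hlt
    · -- T' = T : we get P m
      left
      intro x hx a ha
      constructor
      · have : x * a ∈ T' := hmemT'.2 (hSG (mem2 hx ha))
        rw [← heq] at this; exact this
      · have : a * x ∈ T' := hmemT'.2 (hSG (mem3 ha hx))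
        rw [← heq] at this; exact this
    · -- T' = ⊤ : we get Good
      right
      have htop : T' = ⊤ := hT.2 _ hlt
      intro r a ha
      have hr : r ∈ G := by
        have : r ∈ T' := by rw [htop]; trivial
        exact hmemT'.1 this
      refine AddSubgroup.closure_induction (fun z hz => ?_) ?_ ?_ ?_ hr
      · rcases hz with ((h1 | ⟨x, hx, b, hb, rfl⟩) | ⟨b, hb, x, hx, rfl⟩) | ⟨x, hx, b, hb, x', hx', rfl⟩
        · exact ⟨hTA h1 ha, hAT h1 ha⟩
        · constructor
          · exact hP1a (hNA hx hb) ha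
          · have : a * (x * b) = (a * x) * b := by noncomm_ring
            rw [this]
            exact hP1a (hAN ha hx) hb
        · constructor
          · have : (b * x) * a = (b * x) * a := rfl
            exact hP1a (hAN hb hx) ha
          · exact hP1b (hAN hb hx) ha
        · exact ⟨hP1a (hNAN hx hb hx') ha, hP1b (hNAN hx hb hx') ha⟩
      · exact ⟨by rw [zero_mul]; exact hA_zero, by rw [mul_zero]; exact hA_zero⟩
      · intro u v _ _ hu hv
        rw [add_mul, mul_add]
        exact ⟨hA_add hu.1 hv.1, hA_add hu.2 hv.2⟩
      · intro u _ hu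
        rw [neg_mul, mul_neg]
        exact ⟨hA_neg hu.1, hA_neg hu.2⟩
  -- downward induction
  have key2 : ∀ m : ℕ, P m → Good := by
    intro m
    induction m with
    | zero =>
      intro hP r a ha
      exact ⟨⟨(hP r trivial a ha).1, hJ_mul_left _ ha⟩, ⟨(hP r trivial a ha).2, jac_mul_right ha.2 _⟩⟩
    | succ m ih =>
      intro hP
      rcases key1 m hP with h | h
      · exact ih h
      · exact h
  obtain ⟨n, hn⟩ := exists_Npow_bot R
  have hPn : P n := by
    intro x hx a ha
    rw [hn, Submodule.mem_bot] at hx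
    subst hx
    exact ⟨by rw [zero_mul]; exact zero_mem T, by rw [mul_zero]; exact zero_mem T⟩
  have hGood : Good := key2 n hPn
  refine ⟨TwoSidedIdeal.mk' A hA_zero (fun hx hy => hA_add hx hy) (fun hx => hA_neg hx)
    (fun {x y} hy => (hGood x y hy).1) (fun {x y} hx => (hGood y x hx).2), ?_⟩
  rw [TwoSidedIdeal.coe_mk']
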